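/- arXiv:math/0011117 — 2 statements merged into one kernel-verified Lean document; each statement's English description precedes it below -/
import Mathlib

section
/- For every even integer n ≥ 2, the limit as w → 1 of the expression w^3 + w - 1 + Σ_{i=2}^{n/2} (w-1)(w^2-1)/(w^{i+1}-1) + (w-1)w^2/(w^{n+3}-1) + (w-1)(w^2-1)·[ Σ_{i=1}^{n/2 - 1} 1/((w^{i+1}-1)(w^{i+2}-1)) + 1/((w^{n/2+1}-1)(w^{n+3}-1)) ] equals 2 - 3/(n+3). -/
open Filter Topology

lemma aux_frac (k : ℕ) (hk : 0 < k) :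
    Tendsto (fun w : ℝ => (w - 1) / (w ^ k - 1)) (𝓝[≠] 1) (𝓝 (1 / (k : ℝ))) := by
  have hS : Tendsto (fun w : ℝ => ∑ j ∈ Finset.range k, w ^ j) (𝓝[≠] (1:ℝ)) (𝓝 (k : ℝ)) := by
    have h := (continuous_finset_sum (Finset.range k) fun j _ => continuous_pow j).tendsto (1:ℝ)
    simp only [one_pow, Finset.sum_const, Finset.card_range, nsmul_eq_mul, mul_one] at h
    exact h.mono_left nhdsWithin_le_nhds
  have hk' : (k : ℝ) ≠ 0 := Nat.cast_ne_zero.mpr hk.ne'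
  have h2 : Tendsto (fun w : ℝ => 1 / ∑ j ∈ Finset.range k, w ^ j) (𝓝[≠] (1:ℝ))
      (𝓝 (1 / (k:ℝ))) := tendsto_const_nhds.div hS hk'
  refine h2.congr' ?_
  filter_upwards [hS.eventually_ne hk', self_mem_nhdsWithin] with w hw hw1
  have hw1' : (w : ℝ) - 1 ≠ 0 := sub_ne_zero.mpr hw1
  have hgeom : w ^ k - 1 = (∑ j ∈ Finset.range k, w ^ j) * (w - 1) := (geom_sum_mul w k).symm
  rw [hgeom]
  field_simp

lemma tele (m : ℕ) :
    ∑ i ∈ Finset.Icc 1 m, (1 / ((i:ℝ) + 1)) * (2 * (1 / ((i:ℝ) + 2)))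
      = 1 - 2 / ((m : ℝ) + 2) := by
  induction m with
  | zero => simp
  | succ m ih =>
      rw [Finset.sum_Icc_succ_top (by omega : 1 ≤ m + 1), ih]
      have h1 : (m : ℝ) + 2 ≠ 0 := by positivity
      have h2 : (m : ℝ) + 3 ≠ 0 := by positivity
      push_cast
      field_simp
      ring

lemma tendsto_w2 : Tendsto (fun w : ℝ => w ^ 2 - 1) (𝓝[≠] (1:ℝ)) (𝓝 0) := by
  have h : Tendsto (fun w : ℝ => w ^ 2 - 1) (𝓝 (1:ℝ)) (𝓝 ((1:ℝ) ^ 2 - 1)) :=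
    Continuous.tendsto (by continuity) 1
  norm_num at h
  exact h.mono_left nhdsWithin_le_nhds

lemma tendsto_wp1 : Tendsto (fun w : ℝ => w + 1) (𝓝[≠] (1:ℝ)) (𝓝 2) := by
  have h : Tendsto (fun w : ℝ => w + 1) (𝓝 (1:ℝ)) (𝓝 ((1:ℝ) + 1)) :=
    Continuous.tendsto (by continuity) 1
  norm_num at h
  exact h.mono_left nhdsWithin_le_nhds

theorem estr_An_even (n : ℕ) (hn : 2 ≤ n) (hev : Even n) :
    Tendsto (fun w : ℝ =>
      w ^ 3 + w - 1
        + ∑ i ∈ Finset.Icc 2 (n / 2), ((w - 1) * (w ^ 2 - 1)) / (w ^ (i + 1) - 1)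
        + ((w - 1) * w ^ 2) / (w ^ (n + 3) - 1)
        + (w - 1) * (w ^ 2 - 1) *
            ((∑ i ∈ Finset.Icc 1 (n / 2 - 1),
                1 / ((w ^ (i + 1) - 1) * (w ^ (i + 2) - 1)))
              + 1 / ((w ^ (n / 2 + 1) - 1) * (w ^ (n + 3) - 1))))
      (𝓝[≠] 1) (𝓝 (2 - 3 / ((n : ℝ) + 3))) := by
  -- Piece 1 : w^3 + w - 1 → 1
  have h1 : Tendsto (fun w : ℝ => w ^ 3 + w - 1) (𝓝[≠] (1:ℝ)) (𝓝 1) := by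
    have h : Tendsto (fun w : ℝ => w ^ 3 + w - 1) (𝓝 (1:ℝ)) (𝓝 ((1:ℝ) ^ 3 + 1 - 1)) :=
      Continuous.tendsto (by continuity) 1
    norm_num at h
    exact h.mono_left nhdsWithin_le_nhds
  -- Piece 2 : the first sum → 0
  have h2 : Tendsto (fun w : ℝ =>
      ∑ i ∈ Finset.Icc 2 (n / 2), ((w - 1) * (w ^ 2 - 1)) / (w ^ (i + 1) - 1))
      (𝓝[≠] (1:ℝ)) (𝓝 0) := by
    have h := tendsto_finset_sum (Finset.Icc 2 (n / 2))
      (f := fun (i : ℕ) (w : ℝ) => ((w - 1) * (w ^ 2 - 1)) / (w ^ (i + 1) - 1))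
      (a := fun _ => (0:ℝ)) (fun i _ => by
        have ht := tendsto_w2.mul (aux_frac (i + 1) (Nat.succ_pos i))
        rw [zero_mul] at ht
        exact ht.congr fun w => by ring)
    simpa using h
  -- Piece 3 : (w-1)w^2/(w^{n+3}-1) → 1/(n+3)
  have h3 : Tendsto (fun w : ℝ => ((w - 1) * w ^ 2) / (w ^ (n + 3) - 1))
      (𝓝[≠] (1:ℝ)) (𝓝 (1 / ((n:ℝ) + 3))) := by
    have hw2 : Tendsto (fun w : ℝ => w ^ 2) (𝓝[≠] (1:ℝ)) (𝓝 1) := by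
      have h : Tendsto (fun w : ℝ => w ^ 2) (𝓝 (1:ℝ)) (𝓝 ((1:ℝ) ^ 2)) :=
        Continuous.tendsto (by continuity) 1
      norm_num at h
      exact h.mono_left nhdsWithin_le_nhds
    have ht := hw2.mul (aux_frac (n + 3) (by omega))
    have hcast : ((n + 3 : ℕ) : ℝ) = (n : ℝ) + 3 := by push_cast; ring
    rw [one_mul, hcast] at ht
    exact ht.congr fun w => by ring
  -- Piece 4 : the last group
  have h4 : Tendsto (fun w : ℝ => (w - 1) * (w ^ 2 - 1) *
      ((∑ i ∈ Finset.Icc 1 (n / 2 - 1),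
          1 / ((w ^ (i + 1) - 1) * (w ^ (i + 2) - 1)))
        + 1 / ((w ^ (n / 2 + 1) - 1) * (w ^ (n + 3) - 1))))
      (𝓝[≠] (1:ℝ))
      (𝓝 ((∑ i ∈ Finset.Icc 1 (n / 2 - 1),
            (1 / ((i:ℝ) + 1)) * (2 * (1 / ((i:ℝ) + 2))))
          + (1 / (((n / 2 : ℕ) : ℝ) + 1)) * (2 * (1 / (((n + 3 : ℕ)) : ℝ))))) := by
    have hA : Tendsto (fun w : ℝ =>
        (∑ i ∈ Finset.Icc 1 (n / 2 - 1),
          ((w - 1) / (w ^ (i + 1) - 1)) * ((w + 1) * ((w - 1) / (w ^ (i + 2) - 1))))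
          + ((w - 1) / (w ^ (n / 2 + 1) - 1)) * ((w + 1) * ((w - 1) / (w ^ (n + 3) - 1))))
        (𝓝[≠] (1:ℝ))
        (𝓝 ((∑ i ∈ Finset.Icc 1 (n / 2 - 1),
              (1 / ((i:ℝ) + 1)) * (2 * (1 / ((i:ℝ) + 2))))
            + (1 / (((n / 2 : ℕ) : ℝ) + 1)) * (2 * (1 / (((n + 3 : ℕ)) : ℝ))))) := by
      refine Tendsto.add ?_ ?_
      · refine tendsto_finset_sum _ fun i _ => ?_
        have ht := (aux_frac (i + 1) (Nat.succ_pos i)).mul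
          (tendsto_wp1.mul (aux_frac (i + 2) (by omega)))
        have hc1 : ((i + 1 : ℕ) : ℝ) = (i : ℝ) + 1 := by push_cast; ring
        have hc2 : ((i + 2 : ℕ) : ℝ) = (i : ℝ) + 2 := by push_cast; ring
        rw [hc1, hc2] at ht
        exact ht
      · have ht := (aux_frac (n / 2 + 1) (Nat.succ_pos _)).mul
          (tendsto_wp1.mul (aux_frac (n + 3) (by omega)))
        have hc1 : ((n / 2 + 1 : ℕ) : ℝ) = ((n / 2 : ℕ) : ℝ) + 1 := by push_cast; ring
        rw [hc1] at ht
        exact ht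
    refine hA.congr fun w => ?_
    rw [mul_add, Finset.mul_sum]
    congr 1
    · refine Finset.sum_congr rfl fun i _ => ?_
      rw [one_div, mul_inv]
      ring
    · rw [one_div, mul_inv]
      ring
  -- combine
  have htot := ((h1.add h2).add h3).add h4
  -- identify the limit value
  obtain ⟨k, hk⟩ := hev
  have hk1 : 1 ≤ k := by omega
  have hn2 : n / 2 = k := by omega
  have hval : (1 : ℝ) + 0 + 1 / ((n:ℝ) + 3)
      + ((∑ i ∈ Finset.Icc 1 (n / 2 - 1),
            (1 / ((i:ℝ) + 1)) * (2 * (1 / ((i:ℝ) + 2))))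
          + (1 / (((n / 2 : ℕ) : ℝ) + 1)) * (2 * (1 / (((n + 3 : ℕ)) : ℝ))))
      = 2 - 3 / ((n : ℝ) + 3) := by
    rw [hn2, tele (k - 1)]
    have hcastk : ((k - 1 : ℕ) : ℝ) = (k : ℝ) - 1 := by
      push_cast [Nat.cast_sub hk1]
      ring
    have hcastn : ((n : ℕ) : ℝ) = 2 * (k : ℝ) := by
      subst hk; push_cast; ring
    have hcastn3 : ((n + 3 : ℕ) : ℝ) = 2 * (k : ℝ) + 3 := by
      subst hk; push_cast; ring
    rw [hcastk, hcastn, hcastn3]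
    have hk0 : (1 : ℝ) ≤ (k : ℝ) := by exact_mod_cast hk1
    have e1 : (k : ℝ) - 1 + 2 ≠ 0 := by nlinarith
    have e2 : (k : ℝ) + 1 ≠ 0 := by positivity
    have e3 : 2 * (k : ℝ) + 3 ≠ 0 := by positivity
    field_simp
    ring
  rw [← hval]
  exact htot
end

section
/- For every odd integer n ≥ 3, the limit as w → 1 of the expression (w-1)(w+1)^2 + w + (w^2-1)·[ Σ_{i=2}^{(n-1)/2} (w-1)/(w^{i+1}-1) + w/(w^{(n+3)/2}-1) + Σ_{i=1}^{(n-1)/2} (w-1)/((w^{i+1}-1)(w^{i+2}-1)) ] equals 2. -/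
open Filter Topology

lemma estr_key (m : ℕ) (hm : m ≠ 0) :
    Tendsto (fun w : ℝ => (w - 1) / (w ^ m - 1)) (𝓝[≠] 1) (𝓝 (1 / m)) := by
  have hcont : Tendsto (fun w : ℝ => ∑ j ∈ Finset.range m, w ^ j) (𝓝 1) (𝓝 (m : ℝ)) :=
    (continuous_finset_sum (Finset.range m) (fun j _ => continuous_pow j)).tendsto' 1 _
      (by simp)
  have h1 : Tendsto (fun w : ℝ => (∑ j ∈ Finset.range m, w ^ j)⁻¹) (𝓝[≠] 1)
      (𝓝 (1 / m)) := by
    have hm' : (m : ℝ) ≠ 0 := by exact_mod_cast hm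
    have := (hcont.inv₀ hm').mono_left (nhdsWithin_le_nhds (s := {(1:ℝ)}ᶜ))
    simpa [one_div] using this
  refine h1.congr' ?_
  filter_upwards [self_mem_nhdsWithin] with w hw
  rw [geom_sum_eq hw, inv_div]

lemma estr_tele (k : ℕ) :
    ∑ i ∈ Finset.Icc 1 k, (2 : ℝ) * (1 / (i + 1)) * (1 / (i + 2)) = 1 - 2 / (k + 2) := by
  induction k with
  | zero => norm_num
  | succ k ih =>
    rw [Finset.sum_Icc_succ_top (by omega), ih]
    have h1 : (k : ℝ) + 2 ≠ 0 := by positivity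
    have h2 : (k : ℝ) + 3 ≠ 0 := by positivity
    push_cast
    field_simp
    ring

theorem estr_An_odd (n : ℕ) (hn : 3 ≤ n) (hodd : Odd n) :
    Tendsto (fun w : ℝ =>
      (w - 1) * (w + 1) ^ 2 + w
        + (w ^ 2 - 1) *
            ((∑ i ∈ Finset.Icc 2 ((n - 1) / 2), (w - 1) / (w ^ (i + 1) - 1))
              + w / (w ^ ((n + 3) / 2) - 1)
              + ∑ i ∈ Finset.Icc 1 ((n - 1) / 2),
                  (w - 1) / ((w ^ (i + 1) - 1) * (w ^ (i + 2) - 1))))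
      (𝓝[≠] 1) (𝓝 2) := by
  obtain ⟨k, hk⟩ := hodd
  have hk1 : 1 ≤ k := by omega
  have hA : (n - 1) / 2 = k := by omega
  have hB : (n + 3) / 2 = k + 2 := by omega
  rw [hA, hB]
  have hw1 : Tendsto (fun w : ℝ => w) (𝓝[≠] 1) (𝓝 1) :=
    tendsto_id.mono_left nhdsWithin_le_nhds
  have hw2 : Tendsto (fun w : ℝ => w ^ 2 - 1) (𝓝[≠] 1) (𝓝 0) := by
    have hc : Continuous fun w : ℝ => w ^ 2 - 1 := by fun_prop
    exact (hc.tendsto' 1 0 (by norm_num)).mono_left nhdsWithin_le_nhds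
  have hwp1 : Tendsto (fun w : ℝ => w + 1) (𝓝[≠] 1) (𝓝 2) := by
    have hc : Continuous fun w : ℝ => w + 1 := by fun_prop
    exact (hc.tendsto' 1 2 (by norm_num)).mono_left nhdsWithin_le_nhds
  have hP : Tendsto (fun w : ℝ => (w - 1) * (w + 1) ^ 2 + w) (𝓝[≠] 1) (𝓝 1) := by
    have hc : Continuous fun w : ℝ => (w - 1) * (w + 1) ^ 2 + w := by fun_prop
    exact (hc.tendsto' 1 1 (by norm_num)).mono_left nhdsWithin_le_nhds
  -- first sum: tends to 0
  have hS1 : Tendsto (fun w : ℝ =>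
      ∑ i ∈ Finset.Icc 2 k, (w ^ 2 - 1) * ((w - 1) / (w ^ (i + 1) - 1)))
      (𝓝[≠] 1) (𝓝 0) := by
    have := tendsto_finset_sum (Finset.Icc 2 k) (f := fun i (w : ℝ) =>
      (w ^ 2 - 1) * ((w - 1) / (w ^ (i + 1) - 1)))
      (fun i _ => hw2.mul (estr_key (i + 1) (by omega)))
    simpa using this
  -- middle term
  have hS2 : Tendsto (fun w : ℝ => (w + 1) * w * ((w - 1) / (w ^ (k + 2) - 1)))
      (𝓝[≠] 1) (𝓝 (2 * 1 * (1 / ((k + 2 : ℕ) : ℝ)))) :=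
    (hwp1.mul hw1).mul (estr_key (k + 2) (by omega))
  -- last sum
  have hS3 : Tendsto (fun w : ℝ =>
      ∑ i ∈ Finset.Icc 1 k,
        (w + 1) * ((w - 1) / (w ^ (i + 1) - 1)) * ((w - 1) / (w ^ (i + 2) - 1)))
      (𝓝[≠] 1)
      (𝓝 (∑ i ∈ Finset.Icc 1 k,
        2 * (1 / ((i + 1 : ℕ) : ℝ)) * (1 / ((i + 2 : ℕ) : ℝ)))) :=
    tendsto_finset_sum _ (fun i _ =>
      (hwp1.mul (estr_key (i + 1) (by omega))).mul (estr_key (i + 2) (by omega)))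
  have hlim := ((hP.add hS1).add hS2).add hS3
  have hL : (1 : ℝ) + 0 + 2 * 1 * (1 / ((k + 2 : ℕ) : ℝ))
      + ∑ i ∈ Finset.Icc 1 k, 2 * (1 / ((i + 1 : ℕ) : ℝ)) * (1 / ((i + 2 : ℕ) : ℝ))
      = 2 := by
    have htele := estr_tele k
    push_cast
    push_cast at htele
    rw [htele]
    have h1 : (k : ℝ) + 2 ≠ 0 := by positivity
    field_simp
    ring
  rw [show (2 : ℝ) = 1 + 0 + 2 * 1 * (1 / ((k + 2 : ℕ) : ℝ))
      + ∑ i ∈ Finset.Icc 1 k, 2 * (1 / ((i + 1 : ℕ) : ℝ)) * (1 / ((i + 2 : ℕ) : ℝ))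
    from hL.symm]
  refine hlim.congr fun w => ?_
  have e3 : ∑ i ∈ Finset.Icc 1 k,
        (w + 1) * ((w - 1) / (w ^ (i + 1) - 1)) * ((w - 1) / (w ^ (i + 2) - 1))
      = ∑ i ∈ Finset.Icc 1 k,
        (w ^ 2 - 1) * ((w - 1) / ((w ^ (i + 1) - 1) * (w ^ (i + 2) - 1))) :=
    Finset.sum_congr rfl fun i _ => by
      rw [mul_assoc, div_mul_div_comm]
      ring
  rw [e3, mul_add, mul_add, Finset.mul_sum, Finset.mul_sum]
  ring
end
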